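/- arXiv:1607.00847 — 3 statements merged into one kernel-verified Lean document; each statement's English description precedes it below -/
import Mathlib

section
/- Let d ≥ 1, let Σ be a symmetric positive definite d×d real matrix, let z ∈ ℝ^d be nonzero, set υ = zᵀΣz, and let α ≥ 0 and φ > 0. Define u = (1/4)·( −αυφ + √(α²υ²φ² + 4υ) )² and β = αφ/(√u + υαφ). Then u > 0, 0 ≤ β·υ < 1, and the updated matrix Σ' = Σ − β·Σ z zᵀ Σ is symmetric positive definite. -/
open Matrix Real

private lemma vecMulVec_mulVec' {d : ℕ} (z : Fin d → ℝ) (w : Fin d → ℝ) :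
    (vecMulVec z z) *ᵥ w = (z ⬝ᵥ w) • z := by
  funext i
  simp [Matrix.mulVec, dotProduct, vecMulVec_apply, Finset.mul_sum, mul_comm,
    mul_left_comm]

/-- **The CBR covariance update preserves positive definiteness.** With
`u = ¼(−αυφ + √(α²υ²φ² + 4υ))²` and `β = αφ/(√u + υαφ)`, one has `u > 0`,
`0 ≤ βυ < 1`, and `Σ' = Σ − β Σ z zᵀ Σ` is symmetric positive definite. -/
theorem cbr_covariance_update_posDef
    (d : ℕ) (hd : 1 ≤ d)
    (S : Matrix (Fin d) (Fin d) ℝ) (hS : S.PosDef)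
    (z : Fin d → ℝ) (hz : z ≠ 0)
    (υ : ℝ) (hυ : υ = z ⬝ᵥ S.mulVec z)
    (α : ℝ) (hα : 0 ≤ α) (φ : ℝ) (hφ : 0 < φ)
    (u β : ℝ)
    (hu : u = (1/4) * (-(α * υ * φ) + Real.sqrt (α^2 * υ^2 * φ^2 + 4 * υ))^2)
    (hβ : β = α * φ / (Real.sqrt u + υ * α * φ))
    (S' : Matrix (Fin d) (Fin d) ℝ)
    (hS' : S' = S - β • (S * vecMulVec z z * S)) :
    0 < u ∧ 0 ≤ β * υ ∧ β * υ < 1 ∧ S'.PosDef := by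
  have hυpos : 0 < υ := by
    have := hS.dotProduct_mulVec_pos hz
    simpa [hυ] using this
  set s : ℝ := Real.sqrt (α^2 * υ^2 * φ^2 + 4 * υ) with hs
  have hsq : s^2 = α^2 * υ^2 * φ^2 + 4 * υ := by
    rw [hs, Real.sq_sqrt]; positivity
  have hs_gt : α * υ * φ < s := by
    nlinarith [Real.sqrt_nonneg (α^2 * υ^2 * φ^2 + 4 * υ), hsq,
      mul_nonneg (mul_nonneg hα hυpos.le) hφ.le]
  have hupos : 0 < u := by
    rw [hu]
    have : 0 < -(α * υ * φ) + s := by linarith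
    positivity
  have hsu : 0 < Real.sqrt u := Real.sqrt_pos.mpr hupos
  have hden : 0 < Real.sqrt u + υ * α * φ := by
    have : 0 ≤ υ * α * φ := by positivity
    linarith
  have hβ0 : 0 ≤ β := by rw [hβ]; positivity
  have hβυ : β * υ < 1 := by
    rw [hβ, div_mul_eq_mul_div, div_lt_one hden]
    nlinarith
  have hβυ0 : 0 ≤ β * υ := mul_nonneg hβ0 hυpos.le
  -- Hermitian part
  have hVh : (vecMulVec z z)ᴴ = vecMulVec z z := by
    ext i j
    simp [vecMulVec_apply, mul_comm]
  have hmid : (S * vecMulVec z z * S).IsHermitian := by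
    have := Matrix.isHermitian_conjTranspose_mul_mul (A := vecMulVec z z) S hVh
    rwa [hS.1.eq] at this
  have hherm : S'.IsHermitian := by
    rw [hS']
    unfold Matrix.IsHermitian
    rw [conjTranspose_sub, conjTranspose_smul, hS.1.eq, hmid.eq, star_trivial]
  -- symmetry of the bilinear form
  have hSt : Sᵀ = S := by
    have := hS.1.eq
    simpa [conjTranspose_eq_transpose_of_trivial] using this
  have hsym : ∀ v w : Fin d → ℝ, v ⬝ᵥ S *ᵥ w = w ⬝ᵥ S *ᵥ v := by
    intro v w
    rw [Matrix.dotProduct_mulVec, ← Matrix.mulVec_transpose, hSt, dotProduct_comm]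
  refine ⟨hupos, hβυ0, hβυ, Matrix.PosDef.of_dotProduct_mulVec_pos hherm ?_⟩
  intro x hx
  set a : ℝ := x ⬝ᵥ S *ᵥ x with ha
  set b : ℝ := z ⬝ᵥ S *ᵥ x with hb
  have hapos : 0 < a := by simpa [ha] using hS.dotProduct_mulVec_pos hx
  have hq : x ⬝ᵥ S' *ᵥ x = a - β * b^2 := by
    rw [hS', Matrix.sub_mulVec, dotProduct_sub, Matrix.smul_mulVec,
      dotProduct_smul, ← Matrix.mulVec_mulVec, ← Matrix.mulVec_mulVec,
      vecMulVec_mulVec', Matrix.mulVec_smul, dotProduct_smul]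
    have : x ⬝ᵥ S *ᵥ z = b := hsym x z
    rw [this]
    simp only [smul_eq_mul]
    ring
  have hcs : b^2 ≤ υ * a := by
    have h0 : 0 ≤ (υ • x - b • z) ⬝ᵥ S *ᵥ (υ • x - b • z) := by
      have := hS.posSemidef.dotProduct_mulVec_nonneg (υ • x - b • z)
      simpa using this
    have h1 : x ⬝ᵥ S *ᵥ z = b := hsym x z
    have h2 : z ⬝ᵥ S *ᵥ z = υ := hυ.symm
    simp only [Matrix.mulVec_sub, Matrix.mulVec_smul, dotProduct_sub,
      sub_dotProduct, smul_dotProduct, dotProduct_smul,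
      smul_eq_mul, h1, h2, ← ha, ← hb] at h0
    nlinarith
  have hkey : 0 < a - β * b^2 := by
    have h1 : β * b^2 ≤ β * (υ * a) := mul_le_mul_of_nonneg_left hcs hβ0
    nlinarith [mul_pos (by linarith : (0:ℝ) < 1 - β * υ) hapos]
  calc (0:ℝ) < a - β * b^2 := hkey
    _ = star x ⬝ᵥ S' *ᵥ x := by rw [star_trivial, hq]
end

section
/- Let d ≥ 1, let Σ be a symmetric positive definite d×d real matrix, let z ∈ ℝ^d be nonzero, let μ ∈ ℝ^d, y ∈ {−1,+1}, and φ > 0. Set υ = zᵀΣz, m = y·(μ·z), ψ = 1 + φ²/2, ζ = 1 + φ², and let α = (1/(υζ))·( −mψ + √(m²φ⁴/4 + υφ²ζ) ) be the unclipped update coefficient, assumed to satisfy α ≥ 0. Define u = (1/4)·( −αυφ + √(α²υ²φ² + 4υ) )², β = αφ/(√u + υαφ), μ' = μ + α·y·Σz, and Σ' = Σ − β·Σ z zᵀ Σ. Then y·(μ'·z) = φ·√(zᵀ Σ' z); that is, after the update the signed margin equals exactly φ times the standard deviation of the updated model in the direction z, so the loss max(0, φ√(zᵀΣ'z) − y μ'·z)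 is zero. -/
open Matrix Real

lemma cbr_vecMulVec_mulVec (d : ℕ) (z w : Fin d → ℝ) :
    vecMulVec z z *ᵥ w = (z ⬝ᵥ w) • z := by
  funext i
  simp [vecMulVec_apply, mulVec, dotProduct, Finset.mul_sum, mul_comm, mul_left_comm]

lemma cbr_scalar (φ υ m α s r : ℝ) (hφ : 0 < φ) (hυ : 0 < υ)
    (hr2 : r^2 = m^2 * φ^4/4 + υ * φ^2 * (1 + φ^2)) (hr0 : 0 ≤ r)
    (hαr : υ * (1 + φ^2) * α = -(m * (1 + φ^2/2)) + r)
    (hs2 : s^2 = α^2 * υ^2 * φ^2 + 4 * υ) (hs0 : 0 ≤ s) :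
    m + α * υ = φ * ((s - α * υ * φ) / 2) := by
  have hz2 : (0:ℝ) < 1 + φ^2 := by positivity
  have hψp : (0:ℝ) < 1 + φ^2/2 := by positivity
  have hstar : υ^2 * (1 + φ^2) * α^2 + 2 * υ * α * m * (1 + φ^2/2) + m^2 = υ * φ^2 := by
    have hsq : (υ * (1 + φ^2) * α + m * (1 + φ^2/2))^2 = r^2 := by rw [hαr]; ring
    rw [hr2] at hsq
    have hfac : (υ^2 * (1 + φ^2) * α^2 + 2 * υ * α * m * (1 + φ^2/2) + m^2 - υ * φ^2)
        * (1 + φ^2) = 0 := by linear_combination hsq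
    rcases mul_eq_zero.mp hfac with h | h
    · linarith
    · linarith
  have hmnn : 0 ≤ m + α * υ * (1 + φ^2/2) := by
    have h1 : (m + α * υ * (1 + φ^2/2)) * (1 + φ^2) = -(m * φ^4/4) + (1 + φ^2/2) * r := by
      linear_combination (1 + φ^2/2) * hαr
    rcases le_or_gt m 0 with hm0 | hm0
    · have h0 : 0 ≤ (m + α * υ * (1 + φ^2/2)) * (1 + φ^2) := by
        rw [h1]; nlinarith [mul_nonneg hψp.le hr0,
          mul_nonneg (neg_nonneg.2 hm0) (by positivity : (0:ℝ) ≤ φ^4)]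
      exact (mul_nonneg_iff_of_pos_right hz2).mp h0
    · have h2' : ((1 + φ^2/2) * r)^2 - (m * φ^4/4)^2
          = (1 + φ^2/2)^2 * (υ * φ^2 * (1 + φ^2)) + m^2 * φ^4/4 * (1 + φ^2) := by
        linear_combination (1 + φ^2/2)^2 * hr2
      have h2'' : (0:ℝ) ≤ (1 + φ^2/2)^2 * (υ * φ^2 * (1 + φ^2)) + m^2 * φ^4/4 * (1 + φ^2) := by
        positivity
      have h3 : m * φ^4/4 ≤ (1 + φ^2/2) * r := by
        nlinarith [mul_nonneg hψp.le hr0, hm0, hφ]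
      have h4 : 0 ≤ (m + α * υ * (1 + φ^2/2)) * (1 + φ^2) := by rw [h1]; linarith
      exact (mul_nonneg_iff_of_pos_right hz2).mp h4
  have h2 : (2 * (m + α * υ * (1 + φ^2/2)))^2 = (φ * s)^2 := by
    linear_combination 4 * hstar - φ^2 * hs2
  have h3 : 2 * (m + α * υ * (1 + φ^2/2)) = φ * s := by
    have hφs : 0 ≤ φ * s := mul_nonneg hφ.le hs0
    have e1 : 2 * (m + α * υ * (1 + φ^2/2))
        = Real.sqrt ((2 * (m + α * υ * (1 + φ^2/2)))^2) :=
      (Real.sqrt_sq (by linarith)).symm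
    rw [e1, h2, Real.sqrt_sq hφs]
  linarith

set_option maxHeartbeats 1000000 in
/-- **The unclipped CBR update attains the probabilistic margin exactly.** If the
unclipped coefficient `α` is nonnegative, then after the update `μ' = μ + αyΣz`,
`Σ' = Σ − βΣzzᵀΣ`, the signed margin satisfies `y μ'·z = φ√(zᵀΣ'z)`, so the
loss `max(0, φ√(zᵀΣ'z) − y μ'·z)` vanishes. -/
theorem cbr_unclipped_update_zero_loss
    (d : ℕ) (hd : 1 ≤ d)
    (S : Matrix (Fin d) (Fin d) ℝ) (hS : S.PosDef)
    (z : Fin d → ℝ) (hz : z ≠ 0)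
    (μ : Fin d → ℝ) (y : ℝ) (hy : y = 1 ∨ y = -1) (φ : ℝ) (hφ : 0 < φ)
    (υ m ψ ζ α u β : ℝ)
    (hυ : υ = z ⬝ᵥ S.mulVec z)
    (hm : m = y * (μ ⬝ᵥ z))
    (hψ : ψ = 1 + φ^2 / 2)
    (hζ : ζ = 1 + φ^2)
    (hα : α = (1 / (υ * ζ)) * (-(m * ψ) + Real.sqrt (m^2 * φ^4 / 4 + υ * φ^2 * ζ)))
    (hαnn : 0 ≤ α)
    (hu : u = (1/4) * (-(α * υ * φ) + Real.sqrt (α^2 * υ^2 * φ^2 + 4 * υ))^2)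
    (hβ : β = α * φ / (Real.sqrt u + υ * α * φ))
    (μ' : Fin d → ℝ) (S' : Matrix (Fin d) (Fin d) ℝ)
    (hμ' : μ' = μ + (α * y) • S.mulVec z)
    (hS' : S' = S - β • (S * vecMulVec z z * S)) :
    y * (μ' ⬝ᵥ z) = φ * Real.sqrt (z ⬝ᵥ S'.mulVec z) ∧
      max 0 (φ * Real.sqrt (z ⬝ᵥ S'.mulVec z) - y * (μ' ⬝ᵥ z)) = 0 := by
  subst hψ hζ
  have hυpos : 0 < υ := by
    rw [hυ]; simpa using hS.dotProduct_mulVec_pos hz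
  have hy2 : y ^ 2 = 1 := by rcases hy with h | h <;> simp [h]
  -- the margin after the update
  have hmargin : y * (μ' ⬝ᵥ z) = m + α * υ := by
    subst hμ'
    have hcomm : S.mulVec z ⬝ᵥ z = z ⬝ᵥ S.mulVec z := dotProduct_comm _ _
    rw [add_dotProduct, smul_dotProduct, hcomm, ← hυ, hm]
    simp only [smul_eq_mul]
    linear_combination (α * υ) * hy2
  -- s = sqrt discriminant
  set s : ℝ := Real.sqrt (α^2 * υ^2 * φ^2 + 4 * υ) with hs
  have hsnn : 0 ≤ α^2 * υ^2 * φ^2 + 4 * υ := by positivity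
  have hs2 : s ^ 2 = α^2 * υ^2 * φ^2 + 4 * υ := Real.sq_sqrt hsnn
  have hs0 : 0 ≤ s := Real.sqrt_nonneg _
  clear_value s
  have hsge : α * υ * φ < s := by
    nlinarith [hs0, hυpos, mul_nonneg (mul_nonneg hαnn hυpos.le) hφ.le]
  have hsu : Real.sqrt u = (s - α * υ * φ) / 2 := by
    rw [hu]
    rw [show (1/4 : ℝ) * (-(α * υ * φ) + s)^2 = ((s - α * υ * φ)/2)^2 by ring]
    exact Real.sqrt_sq (by linarith)
  have hden : Real.sqrt u + υ * α * φ = (s + α * υ * φ) / 2 := by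
    rw [hsu]; ring
  have hne : s + α * υ * φ ≠ 0 := by
    nlinarith [mul_nonneg (mul_nonneg hαnn hυpos.le) hφ.le]
  have hβ' : β = 2 * α * φ / (s + α * υ * φ) := by
    rw [hβ, hden]; field_simp
  -- quadratic form after the update
  have hquad : z ⬝ᵥ S'.mulVec z = υ - β * υ^2 := by
    subst hS'
    rw [sub_mulVec, dotProduct_sub, ← hυ, smul_mulVec, dotProduct_smul]
    congr 1
    have h1 : (S * vecMulVec z z * S) *ᵥ z = S *ᵥ (vecMulVec z z *ᵥ (S *ᵥ z)) := by
      rw [← mulVec_mulVec, ← mulVec_mulVec]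
    rw [h1, cbr_vecMulVec_mulVec, mulVec_smul, dotProduct_smul, ← hυ]
    simp only [smul_eq_mul]; ring
  have hquadu : z ⬝ᵥ S'.mulVec z = u := by
    have e1 : β * υ^2 = υ - u := by
      rw [hβ', hu, div_mul_eq_mul_div, div_eq_iff hne]
      linear_combination ((s - α * υ * φ)/4) * hs2
    rw [hquad]; linarith [e1]
  -- r = sqrt of the α-discriminant
  set r : ℝ := Real.sqrt (m^2 * φ^4 / 4 + υ * φ^2 * (1 + φ^2)) with hr
  have hrnn : 0 ≤ m^2 * φ^4 / 4 + υ * φ^2 * (1 + φ^2) := by positivity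
  have hr2 : r ^ 2 = m^2 * φ^4 / 4 + υ * φ^2 * (1 + φ^2) := Real.sq_sqrt hrnn
  have hrpos : 0 ≤ r := Real.sqrt_nonneg _
  clear_value r
  have hυζ : υ * (1 + φ^2) ≠ 0 := by positivity
  have hαr : υ * (1 + φ^2) * α = -(m * (1 + φ^2/2)) + r := by
    rw [hα]; field_simp
  have hkey : m + α * υ = φ * ((s - α * υ * φ) / 2) :=
    cbr_scalar φ υ m α s r hφ hυpos
      (by linear_combination hr2) hrpos (by linear_combination hαr)
      (by linear_combination hs2) hs0
  have hfinal : y * (μ' ⬝ᵥ z) = φ * Real.sqrt (z ⬝ᵥ S'.mulVec z) := by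
    rw [hmargin, hquadu, hsu, hkey]
  exact ⟨hfinal, by rw [hfinal]; simp⟩
end

section
/- Let υ > 0, φ > 0, and m ∈ ℝ, and set ψ = 1 + φ²/2 and ζ = 1 + φ². Then α̂ = (1/(υζ))·( −mψ + √(m²φ⁴/4 + υφ²ζ) ) is a real root of the quadratic equation ζυ²·α² + 2mψυ·α + (m² − υφ²) = 0, and moreover α̂ > 0 if and only if m < φ·√υ. -/
open Real

/-- **The unclipped CBR coefficient is a root of the update quadratic.** With
`ψ = 1 + φ²/2` and `ζ = 1 + φ²`, the value
`α̂ = (1/(υζ))(−mψ + √(m²φ⁴/4 + υφ²ζ))` satisfies `ζυ²α̂² + 2mψυα̂ + (m² − υφ²) = 0`,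
and `α̂ > 0` if and only if `m < φ√υ`. -/
theorem cbr_coefficient_root_and_positivity
    (υ φ m : ℝ) (hυ : 0 < υ) (hφ : 0 < φ)
    (ψ ζ αhat : ℝ)
    (hψ : ψ = 1 + φ^2 / 2)
    (hζ : ζ = 1 + φ^2)
    (hαhat : αhat = (1 / (υ * ζ)) *
      (-(m * ψ) + Real.sqrt (m^2 * φ^4 / 4 + υ * φ^2 * ζ))) :
    ζ * υ^2 * αhat^2 + 2 * m * ψ * υ * αhat + (m^2 - υ * φ^2) = 0 ∧
      (0 < αhat ↔ m < φ * Real.sqrt υ) := by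
  have hζ0 : 0 < ζ := by rw [hζ]; positivity
  set s := Real.sqrt (m^2 * φ^4 / 4 + υ * φ^2 * ζ) with hsdef
  have hD : 0 < m^2 * φ^4 / 4 + υ * φ^2 * ζ := by positivity
  have hs0 : 0 < s := Real.sqrt_pos.mpr hD
  have hs2 : s^2 = m^2 * φ^4 / 4 + υ * φ^2 * ζ := Real.sq_sqrt hD.le
  have hυζ : (υ * ζ) ≠ 0 := by positivity
  have hsq : Real.sqrt υ ^ 2 = υ := Real.sq_sqrt hυ.le
  have hsqrtυ : 0 < Real.sqrt υ := Real.sqrt_pos.mpr hυ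
  have hψζ : ψ^2 = ζ + φ^4 / 4 := by rw [hψ, hζ]; ring
  have hψ0 : 0 < ψ := by rw [hψ]; positivity
  have hfs : (φ * Real.sqrt υ)^2 = φ^2 * υ := by rw [mul_pow, hsq]
  constructor
  · rw [hαhat]
    field_simp
    linear_combination hs2 - m^2 * hψζ
  · rw [hαhat]
    have hpos : 0 < 1 / (υ * ζ) := by positivity
    have key : 0 < (1 / (υ * ζ)) * (-(m * ψ) + s) ↔ m * ψ < s := by
      constructor
      · intro h
        by_contra hc
        push_neg at hc
        have hle : -(m * ψ) + s ≤ 0 := by linarith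
        nlinarith [mul_nonpos_of_nonneg_of_nonpos hpos.le hle]
      · intro h
        have : 0 < -(m * ψ) + s := by linarith
        exact mul_pos hpos this
    rw [key]
    constructor
    · intro h
      rcases le_or_gt m 0 with hm | hm
      · calc m ≤ 0 := hm
          _ < φ * Real.sqrt υ := mul_pos hφ hsqrtυ
      · have hmψ : 0 < m * ψ := mul_pos hm hψ0
        have h2 : (m * ψ)^2 < s^2 := by
          exact pow_lt_pow_left₀ h hmψ.le two_ne_zero
        have h3 : m^2 < (φ * Real.sqrt υ)^2 := by
          rw [hfs]; nlinarith
        have := lt_of_pow_lt_pow_left₀ 2 (mul_pos hφ hsqrtυ).le h3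
        linarith
    · intro h
      rcases le_or_gt m 0 with hm | hm
      · nlinarith
      · have h3 : m^2 < (φ * Real.sqrt υ)^2 := by
          exact pow_lt_pow_left₀ h hm.le two_ne_zero
        rw [hfs] at h3
        have h2 : (m * ψ)^2 < s^2 := by nlinarith
        exact lt_of_pow_lt_pow_left₀ 2 hs0.le h2
end
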